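/- Suppose f : V → ℝ is differentiable and satisfies μ·(1/2)‖u−v‖²_M ≤ D_f(u,v) ≤ L·(1/2)‖u−v‖²_M for SPD M with 0 < μ ≤ L. Then the convex conjugate f* satisfies (1/L)·(1/2)‖ξ−η‖²_{M⁻¹} ≤ D_{f*}(ξ,η) ≤ (1/μ)·(1/2)‖ξ−η‖²_{M⁻¹} for all ξ, η; i.e., μ_{f*,M⁻¹} = 1/L_{f,M} and L_{f*,M⁻¹} = 1/μ_{f,M}. -/

import Mathlib

open RealInnerProductSpace Topology


lemma aux_key {n : ℕ} (M Minv : EuclideanSpace ℝ (Fin n) →ₗ[ℝ] EuclideanSpace ℝ (Fin n))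
    (hMsym : ∀ x y, ⟪M x, y⟫ = ⟪x, M y⟫)
    (hMposnn : ∀ x, 0 ≤ ⟪M x, x⟫)
    (hMid : ∀ x, M (Minv x) = x)
    (c : ℝ) (hc : 0 < c) (d w : EuclideanSpace ℝ (Fin n)) :
    ⟪d, w⟫ - c * (1/2 * ⟪M w, w⟫) ≤ (1/c) * (1/2 * ⟪Minv d, d⟫) := by
  have hcne : c ≠ 0 := ne_of_gt hc
  have h0 : 0 ≤ ⟪M (w - c⁻¹ • Minv d), w - c⁻¹ • Minv d⟫ := hMposnn _
  have hexp : ⟪M (w - c⁻¹ • Minv d), w - c⁻¹ • Minv d⟫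
      = ⟪M w, w⟫ - 2*c⁻¹*⟪d, w⟫ + c⁻¹^2 * ⟪Minv d, d⟫ := by
    simp only [map_sub, map_smul, inner_sub_left, inner_sub_right, inner_smul_left,
      inner_smul_right, hMid, RCLike.star_def, conj_trivial]
    rw [hMsym w (Minv d), hMid, real_inner_comm w d, real_inner_comm d (Minv d)]
    ring
  rw [hexp] at h0
  have h1 : 0 ≤ c * (⟪M w, w⟫ - 2*c⁻¹*⟪d, w⟫ + c⁻¹^2 * ⟪Minv d, d⟫) :=
    mul_nonneg hc.le h0
  have h2 : c * c⁻¹ = 1 := mul_inv_cancel₀ hcne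
  have h3 : c * (⟪M w, w⟫ - 2*c⁻¹*⟪d, w⟫ + c⁻¹^2 * ⟪Minv d, d⟫)
      = c*⟪M w, w⟫ - 2*(c*c⁻¹)*⟪d, w⟫ + (c*c⁻¹)*(c⁻¹*⟪Minv d, d⟫) := by ring
  rw [h3, h2] at h1
  simp only [one_div]
  linarith

lemma aux_keyEq {n : ℕ} (M Minv : EuclideanSpace ℝ (Fin n) →ₗ[ℝ] EuclideanSpace ℝ (Fin n))
    (hMid : ∀ x, M (Minv x) = x)
    (c : ℝ) (hc : 0 < c) (d : EuclideanSpace ℝ (Fin n)) :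
    ⟪d, c⁻¹ • Minv d⟫ - c * (1/2 * ⟪M (c⁻¹ • Minv d), c⁻¹ • Minv d⟫)
      = (1/c) * (1/2 * ⟪Minv d, d⟫) := by
  have hcne : c ≠ 0 := ne_of_gt hc
  simp only [map_smul, inner_smul_left, inner_smul_right, hMid, RCLike.star_def, conj_trivial]
  rw [real_inner_comm d (Minv d)]
  field_simp
  ring


lemma aux_posdef_bound {n : ℕ} (M : EuclideanSpace ℝ (Fin n) →ₗ[ℝ] EuclideanSpace ℝ (Fin n))
    (hMpos : ∀ x, x ≠ 0 → 0 < ⟪M x, x⟫) :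
    ∃ c > 0, ∀ x, c * ‖x‖^2 ≤ ⟪M x, x⟫ := by
  by_cases hn : ∃ x : EuclideanSpace ℝ (Fin n), x ≠ 0
  · obtain ⟨x₀, hx₀⟩ := hn
    have hMc : Continuous M := M.continuous_of_finiteDimensional
    have hcont : Continuous fun x : EuclideanSpace ℝ (Fin n) => ⟪M x, x⟫ :=
      Continuous.inner hMc continuous_id
    have hS : IsCompact (Metric.sphere (0 : EuclideanSpace ℝ (Fin n)) 1) :=
      isCompact_sphere _ _
    have hSne : (Metric.sphere (0 : EuclideanSpace ℝ (Fin n)) 1).Nonempty := by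
      refine ⟨‖x₀‖⁻¹ • x₀, ?_⟩
      have : ‖x₀‖ ≠ 0 := norm_ne_zero_iff.2 hx₀
      simp [norm_smul, inv_mul_cancel₀ this, abs_of_nonneg (norm_nonneg x₀)]
    obtain ⟨y, hyS, hy⟩ := hS.exists_isMinOn hSne hcont.continuousOn
    have hyn : ‖y‖ = 1 := by simpa using mem_sphere_zero_iff_norm.1 hyS
    have hy0 : y ≠ 0 := by intro h; rw [h] at hyn; simp at hyn
    refine ⟨⟪M y, y⟫, hMpos y hy0, fun x => ?_⟩
    by_cases hx : x = 0
    · simp [hx]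
    · have hxn : ‖x‖ ≠ 0 := norm_ne_zero_iff.2 hx
      have hmem : ‖x‖⁻¹ • x ∈ Metric.sphere (0 : EuclideanSpace ℝ (Fin n)) 1 := by
        simp [norm_smul, inv_mul_cancel₀ hxn, abs_of_nonneg (norm_nonneg x)]
      have h1 : ⟪M y, y⟫ ≤ ⟪M (‖x‖⁻¹ • x), ‖x‖⁻¹ • x⟫ := hy hmem
      have h2 : ⟪M (‖x‖⁻¹ • x), ‖x‖⁻¹ • x⟫ = (‖x‖⁻¹)^2 * ⟪M x, x⟫ := by
        simp [map_smul, inner_smul_left, inner_smul_right]; ring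
      rw [h2] at h1
      have hx2 : (0:ℝ) < ‖x‖^2 := by positivity
      have := mul_le_mul_of_nonneg_left h1 (le_of_lt hx2)
      have heq : ‖x‖^2 * ((‖x‖⁻¹)^2 * ⟪M x, x⟫) = ⟪M x, x⟫ := by field_simp
      linarith
  · push_neg at hn
    exact ⟨1, one_pos, fun x => by simp [hn x, hn (M x)]⟩

lemma aux_exists_max {n : ℕ} (g : EuclideanSpace ℝ (Fin n) → ℝ) (hg : Continuous g)
    (k B a : ℝ) (hk : 0 < k) (ha : 0 ≤ a)
    (hbound : ∀ u, g u ≤ B + a * ‖u‖ - k * ‖u‖^2) :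
    ∃ u, ∀ w, g w ≤ g u := by
  obtain ⟨R, hR⟩ : ∃ R : ℝ, R = (a + |B| + |g 0| + 1)/k + 1 := ⟨_, rfl⟩
  have hnum : 0 ≤ a + |B| + |g 0| + 1 := by positivity
  have hR1 : 1 ≤ R := by
    have : 0 ≤ (a + |B| + |g 0| + 1)/k := div_nonneg hnum hk.le
    rw [hR]; linarith
  have hR0 : 0 < R := by linarith
  have hK : IsCompact (Metric.closedBall (0 : EuclideanSpace ℝ (Fin n)) R) :=
    isCompact_closedBall _ _
  have hKne : (Metric.closedBall (0 : EuclideanSpace ℝ (Fin n)) R).Nonempty :=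
    ⟨0, by simp [hR0.le]⟩
  obtain ⟨u, huK, hu⟩ := hK.exists_isMaxOn hKne hg.continuousOn
  refine ⟨u, fun w => ?_⟩
  by_cases hw : w ∈ Metric.closedBall (0 : EuclideanSpace ℝ (Fin n)) R
  · exact hu hw
  · have h0K : (0 : EuclideanSpace ℝ (Fin n)) ∈ Metric.closedBall (0 : EuclideanSpace ℝ (Fin n)) R := by
      simp [hR0.le]
    have hg0 : g 0 ≤ g u := hu h0K
    have ht : R ≤ ‖w‖ := by
      simp only [Metric.mem_closedBall, dist_zero_right, not_le] at hw
      exact hw.le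
    set t : ℝ := ‖w‖ with htdef
    have ht1 : 1 ≤ t := le_trans hR1 ht
    have hkR : k * R = a + |B| + |g 0| + 1 + k := by
      rw [hR]; field_simp
    have ht0 : (0:ℝ) ≤ t := by linarith
    have h1 : k * R * t ≤ k * t * t := by
      have := mul_le_mul_of_nonneg_left ht (mul_nonneg hk.le ht0)
      linarith
    have hb : 0 ≤ |B| + |g 0| + 1 := by positivity
    have h3a : (|B| + |g 0| + 1) * 1 ≤ (|B| + |g 0| + 1) * t := mul_le_mul_of_nonneg_left ht1 hb
    have h3b : 0 ≤ k * t := mul_nonneg hk.le ht0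
    have h3c : 0 ≤ a * t := mul_nonneg ha ht0
    have h3 : a*t + |B| + |g 0| + 1 ≤ (a + |B| + |g 0| + 1 + k)*t := by nlinarith [h3a, h3b, h3c]
    have h4 : g w ≤ B + a * t - k * t^2 := hbound w
    have h5 : g w ≤ g 0 := by
      nlinarith [le_abs_self B, neg_abs_le (g 0), h1, hkR, h3, h4]
    linarith

lemma aux_surj {n : ℕ} (f : EuclideanSpace ℝ (Fin n) → ℝ) (hf : Differentiable ℝ f)
    (M : EuclideanSpace ℝ (Fin n) →ₗ[ℝ] EuclideanSpace ℝ (Fin n))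
    (hMpos : ∀ x, x ≠ 0 → 0 < ⟪M x, x⟫)
    (μ : ℝ) (hμ0 : 0 < μ)
    (hlow : ∀ u v, μ * (1/2 * ⟪M (u - v), u - v⟫) ≤ f u - f v - ⟪gradient f v, u - v⟫)
    (ζ : EuclideanSpace ℝ (Fin n)) :
    ∃ u, gradient f u = ζ ∧ ∀ w, ⟪ζ, w⟫ - f w ≤ ⟪ζ, u⟫ - f u := by
  obtain ⟨c₀, hc₀, hc⟩ := aux_posdef_bound M hMpos
  set g : EuclideanSpace ℝ (Fin n) → ℝ := fun u => ⟪ζ, u⟫ - f u with hg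
  have hgc : Continuous g := (continuous_const.inner continuous_id).sub hf.continuous
  have hbound : ∀ u, g u ≤ (-f 0) + ‖ζ - gradient f 0‖ * ‖u‖ - (μ * c₀ / 2) * ‖u‖^2 := by
    intro u
    have h1 := hlow u 0
    simp only [sub_zero] at h1
    have h2 : ⟪ζ, u⟫ - ⟪gradient f 0, u⟫ = ⟪ζ - gradient f 0, u⟫ := by
      rw [inner_sub_left]
    have h3 : ⟪ζ - gradient f 0, u⟫ ≤ ‖ζ - gradient f 0‖ * ‖u‖ := real_inner_le_norm _ _
    have h4 : c₀ * ‖u‖^2 ≤ ⟪M u, u⟫ := hc u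
    have h5 : μ * (c₀ * ‖u‖^2) ≤ μ * ⟪M u, u⟫ := by nlinarith
    simp only [hg]
    nlinarith [h1, h3, h5]
  obtain ⟨u, hu⟩ := aux_exists_max g hgc (μ * c₀ / 2) (-f 0) ‖ζ - gradient f 0‖
    (by positivity) (norm_nonneg _) hbound
  refine ⟨u, ?_, hu⟩
  -- first-order condition
  have hmin : IsLocalMin (fun w => f w - ⟪ζ, w⟫) u := by
    apply Filter.Eventually.of_forall
    intro w
    have := hu w
    simp only [hg] at this
    show f u - ⟪ζ, u⟫ ≤ f w - ⟪ζ, w⟫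
    linarith
  have hd : HasFDerivAt (fun w => f w - ⟪ζ, w⟫)
      (fderiv ℝ f u - innerSL ℝ ζ) u :=
    ((hf u).hasFDerivAt).sub ((innerSL ℝ ζ).hasFDerivAt)
  have h0 : fderiv ℝ (fun w => f w - ⟪ζ, w⟫) u = 0 := hmin.fderiv_eq_zero
  rw [hd.fderiv] at h0
  have hfd : fderiv ℝ f u = innerSL ℝ ζ := by
    have := sub_eq_zero.mp h0
    exact this
  have htd : (InnerProductSpace.toDual ℝ (EuclideanSpace ℝ (Fin n))) ζ = innerSL ℝ ζ := by
    ext y; simp [InnerProductSpace.toDual_apply_apply]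
  have hga : HasGradientAt f ζ u := by
    rw [hasGradientAt_iff_hasFDerivAt, htd, ← hfd]
    exact (hf u).hasFDerivAt
  exact hga.gradient

/-- Relation (6.2): conjugate function convexity/smoothness constants in the dual metric. -/
theorem stmt_4 {n : ℕ} (f : EuclideanSpace ℝ (Fin n) → ℝ) (hf : Differentiable ℝ f)
    (M Minv : EuclideanSpace ℝ (Fin n) →ₗ[ℝ] EuclideanSpace ℝ (Fin n))
    (hMsym : ∀ x y, ⟪M x, y⟫ = ⟪x, M y⟫)
    (hMpos : ∀ x, x ≠ 0 → 0 < ⟪M x, x⟫)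
    (hMinv : Minv ∘ₗ M = LinearMap.id) (hMinv' : M ∘ₗ Minv = LinearMap.id)
    (μ L : ℝ) (hμ0 : 0 < μ) (hμL : μ ≤ L)
    (hlow : ∀ u v, μ * (1/2 * ⟪M (u - v), u - v⟫) ≤ f u - f v - ⟪gradient f v, u - v⟫)
    (hup : ∀ u v, f u - f v - ⟪gradient f v, u - v⟫ ≤ L * (1/2 * ⟪M (u - v), u - v⟫))
    (fstar : EuclideanSpace ℝ (Fin n) → ℝ)
    (hfstar : ∀ ξ, fstar ξ = ⨆ u, (⟪ξ, u⟫ - f u)) :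
    ∀ ξ η,
      (1/L) * (1/2 * ⟪Minv (ξ - η), ξ - η⟫) ≤
          fstar ξ - fstar η - ⟪gradient fstar η, ξ - η⟫ ∧
        fstar ξ - fstar η - ⟪gradient fstar η, ξ - η⟫ ≤
          (1/μ) * (1/2 * ⟪Minv (ξ - η), ξ - η⟫) := by
  intro ξ η
  have hL0 : 0 < L := lt_of_lt_of_le hμ0 hμL
  have hMid : ∀ x, M (Minv x) = x := fun x => by
    simpa using LinearMap.ext_iff.1 hMinv' x
  have hMposnn : ∀ x, 0 ≤ ⟪M x, x⟫ := fun x => by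
    by_cases h : x = 0
    · simp [h]
    · exact (hMpos x h).le
  -- bounded above
  have hbdd : ∀ ζ, BddAbove (Set.range fun u => ⟪ζ, u⟫ - f u) := by
    intro ζ
    refine ⟨-f 0 + (1/μ) * (1/2 * ⟪Minv (ζ - gradient f 0), ζ - gradient f 0⟫), ?_⟩
    rintro x ⟨u, rfl⟩
    have h1 := hlow u 0
    simp only [sub_zero] at h1
    have h2 := aux_key M Minv hMsym hMposnn hMid μ hμ0 (ζ - gradient f 0) u
    have h3 : ⟪ζ - gradient f 0, u⟫ = ⟪ζ, u⟫ - ⟪gradient f 0, u⟫ := inner_sub_left _ _ _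
    show ⟪ζ, u⟫ - f u ≤ _
    linarith
  -- maximizer for η
  obtain ⟨v, hgv, hvmax⟩ := aux_surj f hf M hMpos μ hμ0 hlow η
  have hfη : fstar η = ⟪η, v⟫ - f v := by
    rw [hfstar]
    exact le_antisymm (ciSup_le hvmax) (le_ciSup (hbdd η) v)
  -- upper bound with v
  have hub : ∀ ζ, fstar ζ - fstar η - ⟪v, ζ - η⟫ ≤ (1/μ) * (1/2 * ⟪Minv (ζ - η), ζ - η⟫) := by
    intro ζ
    have hsup : (⨆ u, ⟪ζ, u⟫ - f u) ≤
        (⟪η, v⟫ - f v) + ⟪v, ζ - η⟫ + (1/μ) * (1/2 * ⟪Minv (ζ - η), ζ - η⟫) := by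
      apply ciSup_le
      intro u
      have h1 := hlow u v
      rw [hgv] at h1
      have h2 := aux_key M Minv hMsym hMposnn hMid μ hμ0 (ζ - η) (u - v)
      have h3 : ⟪ζ, u⟫ - ⟪η, u - v⟫ = ⟪η, v⟫ + ⟪ζ - η, u - v⟫ + ⟪ζ - η, v⟫ := by
        simp only [inner_sub_left, inner_sub_right]; ring
      have h4 : ⟪v, ζ - η⟫ = ⟪ζ - η, v⟫ := real_inner_comm _ _
      linarith
    rw [hfstar ζ, hfη]
    linarith
  -- lower bound with v
  have hlb : ∀ ζ, (1/L) * (1/2 * ⟪Minv (ζ - η), ζ - η⟫) ≤ fstar ζ - fstar η - ⟪v, ζ - η⟫ := by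
    intro ζ
    set w := L⁻¹ • Minv (ζ - η) with hw
    have hle : ⟪ζ, v + w⟫ - f (v + w) ≤ fstar ζ := by
      rw [hfstar]
      exact le_ciSup (hbdd ζ) _
    have h1 := hup (v + w) v
    rw [hgv] at h1
    simp only [add_sub_cancel_left] at h1
    have h2 := aux_keyEq M Minv hMid L hL0 (ζ - η)
    rw [← hw] at h2
    have h3 : ⟪ζ, v + w⟫ = ⟪η, v⟫ + ⟪η, w⟫ + ⟪ζ - η, v⟫ + ⟪ζ - η, w⟫ := by
      simp only [inner_add_right, inner_sub_left]; ring
    have h4 : ⟪v, ζ - η⟫ = ⟪ζ - η, v⟫ := real_inner_comm _ _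
    rw [hfη]
    linarith
  -- gradient of fstar at η is v
  have hMinvC : Continuous Minv := Minv.continuous_of_finiteDimensional
  obtain ⟨C, hC0, hCle⟩ : ∃ C, 0 ≤ C ∧ ∀ d : EuclideanSpace ℝ (Fin n), ‖Minv d‖ ≤ C * ‖d‖ := by
    refine ⟨‖LinearMap.toContinuousLinearMap Minv‖, norm_nonneg _, fun d => ?_⟩
    exact (LinearMap.toContinuousLinearMap Minv).le_opNorm d
  have hQle : ∀ d : EuclideanSpace ℝ (Fin n),
      (1/2 * ⟪Minv d, d⟫) ≤ (C/2) * (‖d‖ * ‖d‖) := by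
    intro d
    have := real_inner_le_norm (Minv d) d
    have h2 := hCle d
    nlinarith [norm_nonneg d]
  have hQ0 : ∀ d : EuclideanSpace ℝ (Fin n), 0 ≤ (1/2 * ⟪Minv d, d⟫) := by
    intro d
    have h := hMposnn (Minv d)
    rw [hMid d] at h
    rw [real_inner_comm] at h
    linarith
  set K : ℝ := (1/μ) * (C/2) + 1 with hKdef
  have hK : 0 < K := by positivity
  have hlittle : (fun ζ => fstar ζ - fstar η - ⟪v, ζ - η⟫) =o[𝓝 η] fun ζ => ζ - η := by
    rw [Asymptotics.isLittleO_iff]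
    intro ε hε
    have hball : ∀ᶠ ζ in 𝓝 η, ‖ζ - η‖ < ε / K := by
      filter_upwards [Metric.ball_mem_nhds η (div_pos hε hK)] with ζ hζ
      rwa [Metric.mem_ball, dist_eq_norm] at hζ
    filter_upwards [hball] with ζ hζ
    have he1 : 0 ≤ fstar ζ - fstar η - ⟪v, ζ - η⟫ := by
      have h1 := hlb ζ
      have h2 : 0 ≤ (1/L) * (1/2 * ⟪Minv (ζ - η), ζ - η⟫) :=
        mul_nonneg (by positivity) (hQ0 (ζ - η))
      linarith
    have he2 : fstar ζ - fstar η - ⟪v, ζ - η⟫ ≤ K * (‖ζ - η‖ * ‖ζ - η‖) := by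
      have h1 := hub ζ
      have h2 := hQle (ζ - η)
      have h3 : (1/μ) * (1/2 * ⟪Minv (ζ - η), ζ - η⟫) ≤ (1/μ) * ((C/2) * (‖ζ - η‖ * ‖ζ - η‖)) := by
        apply mul_le_mul_of_nonneg_left h2 (by positivity)
      have h4 : 0 ≤ ‖ζ - η‖ * ‖ζ - η‖ := mul_nonneg (norm_nonneg _) (norm_nonneg _)
      rw [hKdef]
      nlinarith
    rw [Real.norm_eq_abs, abs_of_nonneg he1]
    have h5 : K * (‖ζ - η‖ * ‖ζ - η‖) ≤ ε * ‖ζ - η‖ := by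
      have h6 : 0 ≤ ‖ζ - η‖ := norm_nonneg _
      have h7 : K * ‖ζ - η‖ ≤ ε := by
        have := (le_div_iff₀ hK).1 hζ.le
        nlinarith
      nlinarith
    linarith
  have hfd : HasFDerivAt fstar (InnerProductSpace.toDual ℝ (EuclideanSpace ℝ (Fin n)) v) η := by
    rw [hasFDerivAt_iff_isLittleO]
    have : ∀ ζ : EuclideanSpace ℝ (Fin n),
        (InnerProductSpace.toDual ℝ (EuclideanSpace ℝ (Fin n)) v) (ζ - η) = ⟪v, ζ - η⟫ := by
      intro ζ; simp [InnerProductSpace.toDual_apply_apply]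
    simpa only [this] using hlittle
  have hgrad : gradient fstar η = v := by
    have : HasGradientAt fstar v η := by
      rw [hasGradientAt_iff_hasFDerivAt]
      exact hfd
    exact this.gradient
  rw [hgrad]
  exact ⟨hlb ξ, hub ξ⟩
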